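/- Let a ∈ ℂ with |a| > 2 and let z ∈ ℂ with |z| > 5/3. Then z² ≠ 1 and |a(z²−1) + 1/(4a(z²−1))| > |a|·|z|. -/

import Mathlib

/-- For `|a| > 2` and `|z| > 5/3` one has `z² ≠ 1` and
`|f(z)| > |a|·|z|`, where `f(z) = a(z²−1) + 1/(4a(z²−1))`. -/
theorem example_map_expanding (a z : ℂ) (ha : 2 < ‖a‖)
    (hz : 5 / 3 < ‖z‖) :
    z ^ 2 ≠ 1 ∧
      ‖a‖ * ‖z‖ <
        ‖a * (z ^ 2 - 1) + 1 / (4 * a * (z ^ 2 - 1))‖ := by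
  have hz0 : (0:ℝ) ≤ ‖z‖ := norm_nonneg z
  have hz2 : (25/9:ℝ) < ‖z ^ 2‖ := by
    rw [norm_pow]; nlinarith
  have htri : ‖z ^ 2‖ ≤ ‖z ^ 2 - 1‖ + 1 := by
    have := norm_add_le (z ^ 2 - 1) 1
    simpa using this
  have hw : (16/9:ℝ) < ‖z ^ 2 - 1‖ := by linarith
  have hw0 : z ^ 2 - 1 ≠ 0 := by
    intro h
    rw [h] at hw
    simp at hw
    linarith
  have hne : z ^ 2 ≠ 1 := fun h => hw0 (by rw [h]; ring)
  refine ⟨hne, ?_⟩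
  have ha0 : a ≠ 0 := by
    intro h; rw [h] at ha; simp at ha; linarith
  set A := ‖a‖ with hA
  set s := ‖z ^ 2 - 1‖ with hs
  have habs : ‖1 / (4 * a * (z ^ 2 - 1))‖ = 1 / (4 * A * s) := by
    rw [norm_div, norm_mul, norm_mul]
    simp [hA, hs]
  have hlow : A * s - 1 / (4 * A * s) ≤
      ‖a * (z ^ 2 - 1) + 1 / (4 * a * (z ^ 2 - 1))‖ := by
    have h1 : ‖a * (z ^ 2 - 1)‖ ≤
        ‖a * (z ^ 2 - 1) + 1 / (4 * a * (z ^ 2 - 1))‖ +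
          ‖1 / (4 * a * (z ^ 2 - 1))‖ := by
      have := norm_add_le
        (a * (z ^ 2 - 1) + 1 / (4 * a * (z ^ 2 - 1))) (-(1 / (4 * a * (z ^ 2 - 1))))
      simpa using this
    rw [norm_mul, habs] at h1
    linarith
  have hAs : (0:ℝ) < 4 * A * s := by positivity
  have hinv : 1 / (4 * A * s) < 9 / 128 := by
    rw [div_lt_div_iff₀ hAs (by norm_num)]
    nlinarith
  have hsr : ‖z‖ ^ 2 - 1 ≤ s := by
    rw [hs]; rw [norm_pow] at htri; linarith
  have : A * ‖z‖ + 9 / 128 < A * s := by nlinarith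
  linarith
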